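/- Let m ≥ 4 be even, h = m/2, n = q^m - 1. The number of integers a with q^h + 1 ≤ a ≤ q^{h+1}, q ∤ a, that are not coset leaders of their q-cyclotomic cosets modulo n equals (q-1)(q-2)/2. Consequently the smallest a with q ∤ a that is not a coset leader is 2q^{m/2} + 1. -/

import Mathlib

/-- The q-cyclotomic coset of a modulo n: {a * q^j mod n : j ≥ 0}. -/
def cyclCoset (q n a : ℕ) : Finset ℕ :=
  (Finset.range n).image (fun j => a * q ^ j % n)

/-- a is the coset leader (smallest element) of its q-cyclotomic coset modulo n. -/
def IsCosetLeader (q n a : ℕ) : Prop :=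
  ∀ j : ℕ, a ≤ a * q ^ j % n

lemma key_mod (q k m a : ℕ) (hq : 2 ≤ q) (hkm : k ≤ m)
    (hlt : a / q ^ k + a % q ^ k * q ^ (m - k) < q ^ m - 1) :
    a * q ^ (m - k) % (q ^ m - 1) = a / q ^ k + a % q ^ k * q ^ (m - k) := by
  have hqm : 1 ≤ q ^ m := Nat.one_le_pow _ _ (by omega)
  have hpow : q ^ k * q ^ (m - k) = q ^ m := by rw [← pow_add]; congr 1; omega
  have hdm := Nat.div_add_mod a (q ^ k)
  have h1 : a * q ^ (m - k) = a / q ^ k * (q ^ m - 1) + (a / q ^ k + a % q ^ k * q ^ (m - k)) := by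
    have : a * q ^ (m - k) = a / q ^ k * q ^ m + a % q ^ k * q ^ (m - k) := by
      calc a * q ^ (m - k) = (q ^ k * (a / q ^ k) + a % q ^ k) * q ^ (m - k) := by rw [hdm]
        _ = a / q ^ k * (q ^ k * q ^ (m - k)) + a % q ^ k * q ^ (m - k) := by ring
        _ = a / q ^ k * q ^ m + a % q ^ k * q ^ (m - k) := by rw [hpow]
    rw [this]
    have h2 : a / q ^ k * q ^ m = a / q ^ k * (q ^ m - 1) + a / q ^ k := by
      conv_lhs => rw [show q ^ m = q ^ m - 1 + 1 from by omega, Nat.mul_add, Nat.mul_one]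
    omega
  rw [h1, Nat.add_comm, Nat.add_mul_mod_self_right, Nat.mod_eq_of_lt hlt]

lemma isLeader_of (q h a : ℕ) (hq : 2 ≤ q) (hh : 2 ≤ h)
    (ha : a ≤ q ^ (h + 1)) (hqa : ¬ q ∣ a) (ht : a / q ^ h ≤ a % q ^ h) :
    IsCosetLeader q (q ^ (2 * h) - 1) a := by
  intro j
  have hq1 : 1 ≤ q := by omega
  have hqh1 : q ≤ q ^ (h - 1) := by
    calc q = q ^ 1 := (pow_one q).symm
    _ ≤ q ^ (h - 1) := Nat.pow_le_pow_right hq1 (by omega)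
  have hee : q ^ (h + 1) * q ^ (h - 1) = q ^ (2 * h) := by rw [← pow_add]; congr 1; omega
  have hqhpos : 1 ≤ q ^ (h + 1) := Nat.one_le_pow _ _ (by omega)
  have hn2 : q ^ (h + 1) + 2 ≤ q ^ (2 * h) := by
    have h1 : q ^ (h + 1) * 2 ≤ q ^ (h + 1) * q ^ (h - 1) := Nat.mul_le_mul_left _ (by omega)
    have h2 : 2 ≤ q ^ (h + 1) := le_trans hq (le_trans hqh1 (Nat.pow_le_pow_right (by omega) (by omega)))
    omega
  have ha' : a < q ^ (h + 1) := by
    rcases Nat.lt_or_ge a (q ^ (h + 1)) with h' | h'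
    · exact h'
    · exfalso; exact hqa (by
        have : a = q ^ (h + 1) := le_antisymm ha h'
        rw [this]; exact dvd_pow_self q (by omega))
  have ha0 : 0 < a := by
    rcases Nat.eq_zero_or_pos a with rfl | h'
    · exact absurd (dvd_zero q) hqa
    · exact h'
  -- reduce exponent mod 2h
  set n := q ^ (2 * h) - 1 with hn
  have hmod : q ^ (2 * h) ≡ 1 [MOD n] := by
    have : (1 : ℕ) ≡ q ^ (2 * h) [MOD n] :=
      (Nat.modEq_iff_dvd' (Nat.one_le_pow _ _ (by omega))).mpr (dvd_refl n)
    exact this.symm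
  have hsplit : a * q ^ j ≡ a * q ^ (j % (2 * h)) [MOD n] := by
    conv_lhs => rw [show j = 2 * h * (j / (2 * h)) + j % (2 * h) from (Nat.div_add_mod j (2*h)).symm]
    rw [pow_add, pow_mul, ← mul_assoc]
    calc a * (q ^ (2*h)) ^ (j / (2*h)) * q ^ (j % (2*h))
        ≡ a * 1 ^ (j / (2*h)) * q ^ (j % (2*h)) [MOD n] :=
          (Nat.ModEq.mul_right _ (Nat.ModEq.mul_left _ (hmod.pow _)))
      _ = a * q ^ (j % (2*h)) := by rw [one_pow, mul_one]
  rw [Nat.ModEq] at hsplit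
  rw [hsplit]
  set j' := j % (2 * h) with hj'
  have hj'lt : j' < 2 * h := Nat.mod_lt _ (by omega)
  rcases Nat.lt_or_ge j' h with hsm | hbig
  · -- small case: a * q^j' < n
    have h1 : a * q ^ j' ≤ (q ^ (h + 1) - 1) * q ^ (h - 1) :=
      Nat.mul_le_mul (by omega) (Nat.pow_le_pow_right hq1 (by omega))
    have h2 : (q ^ (h + 1) - 1) * q ^ (h - 1) = q ^ (2 * h) - q ^ (h - 1) := by
      rw [Nat.sub_mul, hee, one_mul]
    have hlt : a * q ^ j' < n := by omega
    rw [Nat.mod_eq_of_lt hlt]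
    exact Nat.le_mul_of_pos_right a (Nat.one_le_pow _ _ (by omega))
  · -- big case: j' = 2h - k with 1 ≤ k ≤ h
    set k := 2 * h - j' with hk
    have hk1 : 1 ≤ k := by omega
    have hkh : k ≤ h := by omega
    have hj'' : j' = 2 * h - k := by omega
    have hu : a / q ^ k ≤ q ^ (h + 1 - k) := by
      have : a / q ^ k ≤ q ^ (h + 1) / q ^ k := Nat.div_le_div_right ha
      rwa [Nat.pow_div (by omega) (by omega)] at this
    have hv : a % q ^ k < q ^ k := Nat.mod_lt _ (Nat.one_le_pow _ _ (by omega))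
    have he2 : q ^ k * q ^ (2 * h - k) = q ^ (2 * h) := by rw [← pow_add]; congr 1; omega
    have he3 : q ^ (2 * h - k) = q ^ (h - 1) * q ^ (h + 1 - k) := by rw [← pow_add]; congr 1; omega
    have hA2 : 2 ≤ q ^ (h + 1 - k) := by
      calc 2 ≤ q := hq
      _ = q ^ 1 := (pow_one q).symm
      _ ≤ q ^ (h + 1 - k) := Nat.pow_le_pow_right hq1 (by omega)
    have hB : 2 * q ^ (h + 1 - k) ≤ q ^ (2 * h - k) := by
      rw [he3]; exact Nat.mul_le_mul_right _ (by omega)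
    have hvb : a % q ^ k * q ^ (2 * h - k) ≤ (q ^ k - 1) * q ^ (2 * h - k) :=
      Nat.mul_le_mul_right _ (by omega)
    have hvb2 : (q ^ k - 1) * q ^ (2 * h - k) = q ^ (2 * h) - q ^ (2 * h - k) := by
      rw [Nat.sub_mul, he2, one_mul]
    have hBle : q ^ (2 * h - k) ≤ q ^ (2 * h) := Nat.pow_le_pow_right hq1 (by omega)
    have hlt : a / q ^ k + a % q ^ k * q ^ (2 * h - k) < q ^ (2 * h) - 1 := by omega
    rw [hj'', key_mod q k (2 * h) a hq (by omega) hlt]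
    have hv1 : 1 ≤ a % q ^ k := by
      rcases Nat.eq_zero_or_pos (a % q ^ k) with h0 | h'
      · exfalso
        exact hqa (dvd_trans (dvd_pow_self q (by omega)) (Nat.dvd_of_mod_eq_zero h0))
      · exact h'
    rcases Nat.lt_or_ge k h with hkh' | hkh''
    · -- k < h : value ≥ q^(2h-k) ≥ q^(h+1) > a
      have hc1 : q ^ (h + 1) ≤ q ^ (2 * h - k) := Nat.pow_le_pow_right hq1 (by omega)
      have hc2 : q ^ (2 * h - k) ≤ a % q ^ k * q ^ (2 * h - k) :=
        Nat.le_mul_of_pos_left _ hv1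
      exact le_trans (le_trans ha'.le hc1) (le_trans hc2 (Nat.le_add_left _ _))
    · -- k = h
      have hke : k = h := by omega
      obtain ⟨d, hd⟩ : ∃ d, a % q ^ h = a / q ^ h + d := ⟨a % q ^ h - a / q ^ h, by omega⟩
      have hdm := Nat.div_add_mod a (q ^ h)
      have hdle : d ≤ d * q ^ h := Nat.le_mul_of_pos_right d (Nat.one_le_pow _ _ (by omega))
      have hsq : a / q ^ h * q ^ h ≤ q ^ h * (a / q ^ h) := by rw [mul_comm]
      rw [hke]
      have h2h : 2 * h - h = h := by omega
      rw [h2h, hd, Nat.add_mul]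
      have : q ^ h * (a / q ^ h) = a / q ^ h * q ^ h := mul_comm _ _
      omega

lemma notLeader_of (q h a : ℕ) (hq : 2 ≤ q) (hh : 2 ≤ h)
    (ha : a ≤ q ^ (h + 1)) (ht : a % q ^ h < a / q ^ h) :
    ¬ IsCosetLeader q (q ^ (2 * h) - 1) a := by
  intro H
  have hq1 : 1 ≤ q := by omega
  have hqh : q * q ≤ q ^ h := by
    calc q * q = q ^ 2 := (sq q).symm
    _ ≤ q ^ h := Nat.pow_le_pow_right hq1 hh
  have hqq : 2 * q ≤ q * q := Nat.mul_le_mul_right _ hq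
  have he2 : q ^ h * q ^ h = q ^ (2 * h) := by rw [← pow_add]; congr 1; omega
  have hu : a / q ^ h ≤ q := by
    have h1 : a / q ^ h ≤ q ^ (h + 1) / q ^ h := Nat.div_le_div_right ha
    rwa [Nat.pow_div (by omega) (by omega), show h + 1 - h = 1 from by omega, pow_one] at h1
  have hv : a % q ^ h < q ^ h := Nat.mod_lt _ (Nat.one_le_pow _ _ (by omega))
  have hvb : (a % q ^ h + 1) * q ^ h ≤ q ^ (2 * h) := by
    rw [← he2]; exact Nat.mul_le_mul_right _ hv
  have hvb2 : (a % q ^ h + 1) * q ^ h = a % q ^ h * q ^ h + q ^ h := by ring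
  have h2h : 2 * h - h = h := by omega
  have hlt : a / q ^ h + a % q ^ h * q ^ (2 * h - h) < q ^ (2 * h) - 1 := by
    rw [h2h]; omega
  have hkey := key_mod q h (2 * h) a hq (by omega) hlt
  have hH := H h
  rw [show q ^ h = q ^ (2 * h - h) from by rw [h2h]] at hH
  rw [hkey, h2h] at hH
  -- hH : a ≤ a / q^h + a % q^h * q^h, but a = q^h * (a/q^h) + a%q^h and a%q^h < a/q^h
  have hdm := Nat.div_add_mod a (q ^ h)
  obtain ⟨e, hde⟩ : ∃ e, a / q ^ h = a % q ^ h + e + 1 := ⟨a / q ^ h - a % q ^ h - 1, by omega⟩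
  have h1 : (e + 1) * 2 ≤ (e + 1) * q ^ h := Nat.mul_le_mul_left _ (by omega)
  have h2 : q ^ h * (a / q ^ h) = a % q ^ h * q ^ h + (e + 1) * q ^ h := by
    rw [hde]; ring
  omega

lemma notLeader_special (q h : ℕ) (hq : 2 ≤ q) (hh : 2 ≤ h) :
    ¬ IsCosetLeader q (q ^ (2 * h) - 1) (2 * q ^ h + 1) := by
  intro H
  have hq1 : 1 ≤ q := by omega
  have hqh : 4 ≤ q ^ h := by
    calc 4 = 2 ^ 2 := rfl
    _ ≤ q ^ 2 := Nat.pow_le_pow_left hq 2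
    _ ≤ q ^ h := Nat.pow_le_pow_right hq1 hh
  have he2 : q ^ h * q ^ h = q ^ (2 * h) := by rw [← pow_add]; congr 1; omega
  have h4 : 4 * q ^ h ≤ q ^ h * q ^ h := Nat.mul_le_mul_right _ hqh
  have hH := H h
  have he : (2 * q ^ h + 1) * q ^ h = (q ^ (2 * h) - 1) * 2 + (q ^ h + 2) := by
    have h1 : (2 * q ^ h + 1) * q ^ h = 2 * (q ^ h * q ^ h) + q ^ h := by ring
    omega
  rw [he, Nat.mul_add_mod, Nat.mod_eq_of_lt (by omega)] at hH
  omega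

lemma qdiv_helper (q h s t : ℕ) (hq1 : 1 ≤ q) (ht : t < q ^ h) :
    (s * q ^ h + t) / q ^ h = s := by
  rw [mul_comm, Nat.mul_add_div (Nat.one_le_pow _ _ hq1), Nat.div_eq_of_lt ht, add_zero]

lemma qmod_helper (q h s t : ℕ) (hq1 : 1 ≤ q) (ht : t < q ^ h) :
    (s * q ^ h + t) % q ^ h = t := by
  rw [mul_comm, Nat.mul_add_mod, Nat.mod_eq_of_lt ht]

lemma mem_char (q h : ℕ) (hq : 2 ≤ q) (hh : 2 ≤ h) (a : ℕ) :
    (q ^ h + 1 ≤ a ∧ a ≤ q ^ (h + 1) ∧ ¬ q ∣ a ∧ ¬ IsCosetLeader q (q ^ (2 * h) - 1) a)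
    ↔ ∃ s ∈ Finset.range q, a ∈ (Finset.Ico 1 s).image (fun t => s * q ^ h + t) := by
  have hq1 : 1 ≤ q := by omega
  have hqh : q ≤ q ^ h := by
    calc q = q ^ 1 := (pow_one q).symm
    _ ≤ q ^ h := Nat.pow_le_pow_right hq1 (by omega)
  have hsucc : q * q ^ h = q ^ (h + 1) := by rw [← pow_succ']
  constructor
  · rintro ⟨h1, h2, h3, h4⟩
    have hts : a % q ^ h < a / q ^ h := by
      by_contra hc
      exact h4 (isLeader_of q h a hq hh h2 h3 (by omega))
    have hs : a / q ^ h < q := by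
      by_contra hc
      push_neg at hc
      have : q * q ^ h ≤ a := by
        calc q * q ^ h ≤ a / q ^ h * q ^ h := Nat.mul_le_mul_right _ hc
        _ ≤ a := Nat.div_mul_le_self a _
      have haeq : a = q ^ (h + 1) := by omega
      exact h3 (haeq ▸ dvd_pow_self q (by omega))
    have ht1 : 1 ≤ a % q ^ h := by
      rcases Nat.eq_zero_or_pos (a % q ^ h) with h0 | h' 
      · exact absurd (dvd_trans (dvd_pow_self q (by omega)) (Nat.dvd_of_mod_eq_zero h0)) h3
      · exact h'
    refine ⟨a / q ^ h, Finset.mem_range.mpr hs, Finset.mem_image.mpr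
      ⟨a % q ^ h, Finset.mem_Ico.mpr ⟨ht1, hts⟩, ?_⟩⟩
    rw [mul_comm]
    exact Nat.div_add_mod a (q ^ h)
  · rintro ⟨s, hs, hmem⟩
    rw [Finset.mem_image] at hmem
    obtain ⟨t, htmem, rfl⟩ := hmem
    rw [Finset.mem_Ico] at htmem
    rw [Finset.mem_range] at hs
    obtain ⟨ht1, hts⟩ := htmem
    have htq : t < q ^ h := lt_of_lt_of_le (lt_trans hts hs) hqh
    have hsle : s * q ^ h + q ^ h ≤ q ^ (h + 1) := by
      have : (s + 1) * q ^ h ≤ q * q ^ h := Nat.mul_le_mul_right _ (by omega)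
      rw [add_one_mul] at this
      omega
    have hqh1 : 1 ≤ q ^ h := Nat.one_le_pow _ _ (by omega)
    have hsq : q ^ h ≤ s * q ^ h := Nat.le_mul_of_pos_left _ (by omega)
    refine ⟨by omega, by omega, ?_, ?_⟩
    · intro hdvd
      have hd2 : q ∣ s * q ^ h := Dvd.dvd.mul_left (dvd_pow_self q (by omega)) s
      have : q ∣ t := (Nat.dvd_add_right hd2).mp hdvd
      have := Nat.le_of_dvd (by omega) this
      omega
    · refine notLeader_of q h _ hq hh (by omega) ?_
      rw [qdiv_helper q h s t hq1 htq, qmod_helper q h s t hq1 htq]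
      exact hts

lemma card_T (q h : ℕ) (hq : 2 ≤ q) (hh : 2 ≤ h) :
    ((Finset.range q).biUnion
      (fun s => (Finset.Ico 1 s).image (fun t => s * q ^ h + t))).card
      = (q - 1) * (q - 2) / 2 := by
  have hq1 : 1 ≤ q := by omega
  have hqh : q ≤ q ^ h := by
    calc q = q ^ 1 := (pow_one q).symm
    _ ≤ q ^ h := Nat.pow_le_pow_right hq1 (by omega)
  rw [Finset.card_biUnion]
  · have hcard : ∀ s ∈ Finset.range q,
        ((Finset.Ico 1 s).image (fun t => s * q ^ h + t)).card = s - 1 := by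
      intro s _
      rw [Finset.card_image_of_injective _ (add_right_injective _), Nat.card_Ico]
    rw [Finset.sum_congr rfl hcard]
    obtain ⟨r, rfl⟩ : ∃ r, q = r + 1 := ⟨q - 1, by omega⟩
    rw [Finset.sum_range_succ']
    simp only [Nat.add_sub_cancel]
    rw [Finset.sum_range_id]
    congr 1
  · intro s hs s' hs' hne
    rw [Function.onFun, Finset.disjoint_left]
    intro x hx hx'
    rw [Finset.mem_image] at hx hx'
    obtain ⟨t, ht, rfl⟩ := hx
    obtain ⟨t', ht', heq⟩ := hx'
    rw [Finset.mem_Ico] at ht ht'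
    rw [Finset.mem_coe, Finset.mem_range] at hs hs'
    have htq : t < q ^ h := lt_of_lt_of_le (lt_trans ht.2 hs) hqh
    have htq' : t' < q ^ h := lt_of_lt_of_le (lt_trans ht'.2 hs') hqh
    apply hne
    have := congrArg (fun x => x / q ^ h) heq
    simpa [qdiv_helper q h s t hq1 htq, qdiv_helper q h s' t' hq1 htq'] using this.symm

theorem stmt_11 (q m : ℕ) (hq : IsPrimePow q) (hm : Even m) (hm4 : 4 ≤ m) :
    {a : ℕ | q ^ (m / 2) + 1 ≤ a ∧ a ≤ q ^ (m / 2 + 1) ∧ ¬ q ∣ a ∧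
      ¬ IsCosetLeader q (q ^ m - 1) a}.ncard = (q - 1) * (q - 2) / 2 ∧
    IsLeast {a : ℕ | 0 < a ∧ ¬ q ∣ a ∧ ¬ IsCosetLeader q (q ^ m - 1) a}
      (2 * q ^ (m / 2) + 1) := by
  classical
  obtain ⟨r, hr⟩ := hm
  have hq2 : 2 ≤ q := hq.two_le
  have hh : 2 ≤ r := by omega
  have hm2 : m / 2 = r := by omega
  have hpowm : q ^ m = q ^ (2 * r) := by rw [show m = 2 * r from by omega]
  rw [hm2, hpowm]
  have hqr1 : 1 ≤ q ^ r := Nat.one_le_pow _ _ (by omega)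
  constructor
  · have hset : {a : ℕ | q ^ r + 1 ≤ a ∧ a ≤ q ^ (r + 1) ∧ ¬ q ∣ a ∧
        ¬ IsCosetLeader q (q ^ (2 * r) - 1) a}
        = ↑((Finset.range q).biUnion
            (fun s => (Finset.Ico 1 s).image (fun t => s * q ^ r + t))) := by
      ext a
      rw [Set.mem_setOf_eq, Finset.mem_coe, Finset.mem_biUnion]
      exact mem_char q r hq2 hh a
    rw [hset, Set.ncard_coe_finset, card_T q r hq2 hh]
  · constructor
    · refine ⟨by omega, ?_, notLeader_special q r hq2 hh⟩
      intro hdvd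
      have h1 : q ∣ 2 * q ^ r := Dvd.dvd.mul_left (dvd_pow_self q (by omega)) 2
      have h2 : q ∣ 1 := (Nat.dvd_add_right h1).mp hdvd
      have := Nat.le_of_dvd one_pos h2
      omega
    · rintro a ⟨ha0, hqa, hnl⟩
      by_contra hc
      push_neg at hc
      apply hnl
      have hne : a ≠ 2 * q ^ r := by
        intro he
        exact hqa (he ▸ Dvd.dvd.mul_left (dvd_pow_self q (by omega)) 2)
      have halt : a < 2 * q ^ r := by omega
      have hle : a ≤ q ^ (r + 1) := by
        have h1 : 2 * q ^ r ≤ q * q ^ r := Nat.mul_le_mul_right _ hq2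
        have h2 : q * q ^ r = q ^ (r + 1) := by rw [← pow_succ']
        omega
      refine isLeader_of q r a hq2 hh hle hqa ?_
      have hs : a / q ^ r < 2 := by
        rw [Nat.div_lt_iff_lt_mul (by omega)]
        omega
      rcases Nat.eq_zero_or_pos (a / q ^ r) with h1 | h1
      · rw [h1]; exact Nat.zero_le _
      · have ht1 : 1 ≤ a % q ^ r := by
          rcases Nat.eq_zero_or_pos (a % q ^ r) with h0 | h'
          · exact absurd (dvd_trans (dvd_pow_self q (by omega))
              (Nat.dvd_of_mod_eq_zero h0)) hqa
          · exact h'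
        exact le_trans (by omega : a / q ^ r ≤ 1) ht1
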